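/- (Orthogonality of scaled approximations) Let T_N be an N×N real matrix with T_N ⬝ T_Nᵀ diagonal, let Ĝ_N satisfy Ĝ_N ⬝ Ĝ_Nᵀ = a·I_N for some real a, and let B̂_N be a generalized permutation matrix. Define T_{2N} = P_{2N} ⬝ blkdiag(I_N, B̂_N) ⬝ blkdiag(T_N, T_N) ⬝ blkdiag(I_N, Ĝ_N) ⬝ [[I_N, Ī_N],[Ī_N, -I_N]]. Then T_{2N} ⬝ T_{2N}ᵀ is a diagonal matrix. -/

import Mathlib

open Real Matrix

noncomputable def dctII (N : Nat) : Matrix (Fin N) (Fin N) Real :=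
  Matrix.of fun k n => Real.sqrt (2 / N) *
    (if (k : Nat) = 0 then 1 / Real.sqrt 2 else 1) *
    Real.cos ((k : Nat) * (2 * (n : Nat) + 1) * Real.pi / (2 * N))

noncomputable def dctIV (N : Nat) : Matrix (Fin N) (Fin N) Real :=
  Matrix.of fun k n => Real.sqrt (2 / N) *
    Real.cos ((2 * (k : Nat) + 1) * (2 * (n : Nat) + 1) * Real.pi / (4 * N))

noncomputable def dstIV (N : Nat) : Matrix (Fin N) (Fin N) Real :=
  Matrix.of fun k n => Real.sqrt (2 / N) *
    Real.sin ((2 * (k : Nat) + 1) * (2 * (n : Nat) + 1) * Real.pi / (4 * N))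

def exI (N : Nat) : Matrix (Fin N) (Fin N) Real :=
  Matrix.of fun k n => if (k : Nat) + (n : Nat) = N - 1 then 1 else 0

def Jmat (N : Nat) : Matrix (Fin N) (Fin N) Real :=
  Matrix.diagonal fun n => (-1 : Real) ^ (n : Nat)

def pShuffle (N : Nat) : Matrix (Fin (2 * N)) (Fin (2 * N)) Real :=
  Matrix.of fun k n =>
    if (k : Nat) = (if (n : Nat) < N then 2 * (n : Nat) else (2 * (n : Nat)) % (2 * N) + 1)
    then 1 else 0

noncomputable def reix (N : Nat)
    (M : Matrix (Fin N ⊕ Fin N) (Fin N ⊕ Fin N) Real) :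
    Matrix (Fin (2 * N)) (Fin (2 * N)) Real :=
  Matrix.reindex (finSumFinEquiv.trans (finCongr (two_mul N).symm))
    (finSumFinEquiv.trans (finCongr (two_mul N).symm)) M

noncomputable def blk (N : Nat) (A B : Matrix (Fin N) (Fin N) Real) :
    Matrix (Fin (2 * N)) (Fin (2 * N)) Real :=
  reix N (Matrix.fromBlocks A 0 0 B)

noncomputable def butterfly (N : Nat) : Matrix (Fin (2 * N)) (Fin (2 * N)) Real :=
  reix N (Matrix.fromBlocks 1 (exI N) (exI N) (-1))

noncomputable def trilU (N : Nat) : Matrix (Fin N) (Fin N) Real :=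
  Matrix.of fun k n =>
    if (n : Nat) = 0 then Real.sqrt 2 / 2
    else if (n : Nat) ≤ (k : Nat) then 1 else 0

noncomputable def Amat (N : Nat) : Matrix (Fin N) (Fin N) Real :=
  Jmat N * trilU N * Jmat N

noncomputable def Dmat (N : Nat) : Matrix (Fin N) (Fin N) Real :=
  Matrix.diagonal fun n => 2 * Real.cos ((2 * (n : Nat) + 1) * Real.pi / (4 * N))

noncomputable def Gmat (N : Nat) : Matrix (Fin N) (Fin N) Real :=
  Matrix.diagonal fun n =>
    2 * (-1 : Real) ^ (n : Nat) * Real.cos ((2 * (n : Nat) + 1) * Real.pi / (4 * N))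

noncomputable def Bmat (N : Nat) : Matrix (Fin N) (Fin N) Real :=
  -(exI N * trilU N * Jmat N)

def bitrev (m j : Nat) : Nat :=
  (List.range m).foldl (fun acc i => 2 * acc + (if j.testBit i then 1 else 0)) 0

def Rmat (m : Nat) : Matrix (Fin (2 ^ m)) (Fin (2 ^ m)) Real :=
  Matrix.of fun i j => if (i : Nat) = bitrev m (j : Nat) then 1 else 0



section Aux

open Matrix

lemma conj_isDiag {m n : Type*} [Fintype m] [Fintype n] (Q : Matrix n m Real)
    (hQ : ∀ k i j, Q i k ≠ 0 → Q j k ≠ 0 → i = j)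
    {M : Matrix m m Real} (hM : M.IsDiag) : (Q * M * Qᵀ).IsDiag := by
  intro i j hij
  rw [Matrix.mul_apply]
  apply Finset.sum_eq_zero; intro l _
  rw [Matrix.mul_apply, Finset.sum_mul]
  apply Finset.sum_eq_zero; intro k _
  by_cases hk : M k l = 0
  · simp [hk]
  · have hkl : k = l := by by_contra h; exact hk (hM h)
    subst hkl
    by_cases hQi : Q i k = 0
    · simp [hQi]
    by_cases hQj : Q j k = 0
    · simp [Matrix.transpose_apply, hQj]
    exact absurd (hQ k i j hQi hQj) hij

lemma reix_mul (N : Nat) (A B : Matrix (Fin N ⊕ Fin N) (Fin N ⊕ Fin N) Real) :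
    reix N A * reix N B = reix N (A * B) := by
  unfold reix
  simp only [Matrix.reindex_apply, Matrix.submatrix_mul_equiv]

lemma reix_transpose (N : Nat) (A : Matrix (Fin N ⊕ Fin N) (Fin N ⊕ Fin N) Real) :
    (reix N A)ᵀ = reix N Aᵀ := by
  unfold reix
  simp [Matrix.transpose_reindex]

lemma reix_isDiag (N : Nat) {A : Matrix (Fin N ⊕ Fin N) (Fin N ⊕ Fin N) Real}
    (hA : A.IsDiag) : (reix N A).IsDiag := by
  intro i j hij
  unfold reix
  simp only [Matrix.reindex_apply, Matrix.submatrix_apply]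
  exact hA (fun h => hij (by simpa using congrArg (finSumFinEquiv.trans
    (finCongr (two_mul N).symm)) h))

lemma blk_mul (N : Nat) (A B C D : Matrix (Fin N) (Fin N) Real) :
    blk N A B * blk N C D = blk N (A * C) (B * D) := by
  unfold blk
  rw [reix_mul]
  congr 1
  simp [Matrix.fromBlocks_multiply]

lemma blk_transpose (N : Nat) (A B : Matrix (Fin N) (Fin N) Real) :
    (blk N A B)ᵀ = blk N Aᵀ Bᵀ := by
  unfold blk
  rw [reix_transpose]
  congr 1
  simp [Matrix.fromBlocks_transpose]

lemma blk_isDiag (N : Nat) {A B : Matrix (Fin N) (Fin N) Real}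
    (hA : A.IsDiag) (hB : B.IsDiag) : (blk N A B).IsDiag :=
  reix_isDiag N (hA.fromBlocks hB)

lemma exI_transpose (N : Nat) : (exI N)ᵀ = exI N := by
  ext i j
  simp [exI, Matrix.transpose_apply, Nat.add_comm]

lemma exI_mul_self (N : Nat) : exI N * exI N = 1 := by
  ext i j
  rw [Matrix.mul_apply]
  simp only [exI, Matrix.of_apply, ite_mul, one_mul, zero_mul]
  rcases Nat.eq_zero_or_pos N with hN | hN
  · exact absurd i.isLt (by omega)
  have hrev : ((Fin.rev i : Fin N) : Nat) = N - 1 - (i : Nat) := by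
    rw [Fin.val_rev]
    omega
  rw [Finset.sum_eq_single (Fin.rev i)]
  · have hi : (i : Nat) < N := i.isLt
    have hj : (j : Nat) < N := j.isLt
    by_cases h : i = j
    · subst h
      have hc1 : (i : Nat) + ((Fin.rev i : Fin N) : Nat) = N - 1 := by rw [hrev]; omega
      have hc2 : ((Fin.rev i : Fin N) : Nat) + (i : Nat) = N - 1 := by omega
      simp only [Matrix.one_apply, if_pos rfl]
      rw [if_pos (by omega : (i : Nat) + ((Fin.rev i : Fin N) : Nat) = N - 1),
        if_pos (by omega : ((Fin.rev i : Fin N) : Nat) + (i : Nat) = N - 1)]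
      simp
    · have hij : (i : Nat) ≠ (j : Nat) := fun hc => h (Fin.ext hc)
      simp only [Matrix.one_apply, if_neg h, ite_eq_right_iff]
      intro _ hc
      omega
  · intro k _ hk
    have : ¬ ((i : Nat) + (k : Nat) = N - 1) := by
      intro hc
      apply hk
      apply Fin.ext
      rw [hrev]
      omega
    simp [this]
  · intro h; exact absurd (Finset.mem_univ _) h

lemma butterfly_mul_transpose (N : Nat) :
    butterfly N * (butterfly N)ᵀ = (2 : Real) • 1 := by
  unfold butterfly
  rw [reix_transpose, reix_mul]
  have h1 : (Matrix.fromBlocks (1 : Matrix (Fin N) (Fin N) Real) (exI N) (exI N) (-1))ᵀ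
      = Matrix.fromBlocks 1 (exI N) (exI N) (-1) := by
    rw [Matrix.fromBlocks_transpose]
    simp [exI_transpose]
  rw [h1, Matrix.fromBlocks_multiply]
  have h2 : (reix N ((2 : Real) • 1) : Matrix (Fin (2*N)) (Fin (2*N)) Real) = (2 : Real) • 1 := by
    ext i j
    simp [reix, Matrix.one_apply, EmbeddingLike.apply_eq_iff_eq, Fin.ext_iff]
  rw [← h2]
  congr 1
  have h3 : ((2 : Real) • 1 : Matrix (Fin N ⊕ Fin N) (Fin N ⊕ Fin N) Real)
      = Matrix.fromBlocks ((2 : Real) • 1) 0 0 ((2 : Real) • 1) := by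
    rw [← Matrix.fromBlocks_one, Matrix.fromBlocks_smul]
    simp
  rw [h3]
  rw [exI_mul_self]
  congr 1 <;> try ext i j <;> simp [two_smul, Matrix.one_apply] <;> split <;> norm_num

end Aux

theorem scaled_approx_orthogonality {N : Nat}
    (T Bhat Ghat : Matrix (Fin N) (Fin N) Real) (a : Real)
    (hT : (T * Tᵀ).IsDiag)
    (hG : Ghat * Ghatᵀ = a • (1 : Matrix (Fin N) (Fin N) Real))
    (hB : ∃ (d : Fin N → Real) (σ : Equiv.Perm (Fin N)),
      Bhat = Matrix.diagonal d * Matrix.of fun i j => if σ j = i then (1 : Real) else 0) :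
    ((pShuffle N * blk N 1 Bhat * blk N T T * blk N 1 Ghat * butterfly N) *
      (pShuffle N * blk N 1 Bhat * blk N T T * blk N 1 Ghat * butterfly N)ᵀ).IsDiag  := by
  obtain ⟨d, σ, hBhat⟩ := hB
  set P := pShuffle N
  set F := butterfly N
  have hFF : F * Fᵀ = (2 : Real) • 1 := butterfly_mul_transpose N
  set L := blk N 1 Bhat * blk N T T * blk N 1 Ghat with hL
  have hLval : L = blk N T (Bhat * T * Ghat) := by
    rw [hL, blk_mul, blk_mul]
    simp
  have key : (P * blk N 1 Bhat * blk N T T * blk N 1 Ghat * F) *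
      (P * blk N 1 Bhat * blk N T T * blk N 1 Ghat * F)ᵀ
      = (2 : Real) • (P * (L * Lᵀ) * Pᵀ) := by
    have : P * blk N 1 Bhat * blk N T T * blk N 1 Ghat * F = P * L * F := by
      rw [hL]; simp only [mul_assoc]
    rw [this]
    rw [Matrix.transpose_mul, Matrix.transpose_mul]
    calc P * L * F * (Fᵀ * (Lᵀ * Pᵀ))
        = P * L * (F * Fᵀ) * (Lᵀ * Pᵀ) := by simp only [mul_assoc]
      _ = P * L * ((2 : Real) • 1) * (Lᵀ * Pᵀ) := by rw [hFF]
      _ = (2 : Real) • (P * L * (Lᵀ * Pᵀ)) := by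
          rw [Matrix.mul_smul, Matrix.mul_one, Matrix.smul_mul]
      _ = (2 : Real) • (P * (L * Lᵀ) * Pᵀ) := by simp only [mul_assoc]
  rw [key]
  apply Matrix.IsDiag.smul
  have hLL : L * Lᵀ = blk N (T * Tᵀ) (a • (Bhat * (T * Tᵀ) * Bhatᵀ)) := by
    rw [hLval, blk_transpose, blk_mul, Matrix.transpose_mul, Matrix.transpose_mul]
    have hmid : Bhat * T * Ghat * (Ghatᵀ * (Tᵀ * Bhatᵀ))
        = a • (Bhat * (T * Tᵀ) * Bhatᵀ) :=
      calc Bhat * T * Ghat * (Ghatᵀ * (Tᵀ * Bhatᵀ))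
          = Bhat * T * (Ghat * Ghatᵀ) * (Tᵀ * Bhatᵀ) := by simp only [mul_assoc]
        _ = Bhat * T * (a • (1 : Matrix (Fin N) (Fin N) Real)) * (Tᵀ * Bhatᵀ) := by rw [hG]
        _ = a • (Bhat * T * (Tᵀ * Bhatᵀ)) := by
            rw [Matrix.mul_smul, Matrix.mul_one, Matrix.smul_mul]
        _ = a • (Bhat * (T * Tᵀ) * Bhatᵀ) := by simp only [mul_assoc]
    rw [hmid]
  rw [hLL]
  have hBdiag : (Bhat * (T * Tᵀ) * Bhatᵀ).IsDiag := by
    apply conj_isDiag _ _ hT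
    intro k i j hi hj
    rw [hBhat, Matrix.diagonal_mul] at hi hj
    simp only [Matrix.of_apply] at hi hj
    by_cases h1 : σ k = i
    · by_cases h2 : σ k = j
      · rw [← h1, ← h2]
      · simp [h2] at hj
    · simp [h1] at hi
  have hdiag2 : (blk N (T * Tᵀ) (a • (Bhat * (T * Tᵀ) * Bhatᵀ))).IsDiag :=
    blk_isDiag N hT (hBdiag.smul a)
  apply conj_isDiag _ _ hdiag2
  intro k i j hi hj
  unfold P at hi hj
  simp only [pShuffle, Matrix.of_apply, ne_eq, ite_eq_right_iff, not_forall] at hi hj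
  exact Fin.ext (hi.1.trans hj.1.symm)
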